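/- Let ρ : ℝ³ → ℝ be nonnegative, integrable with ∫ ρ = N, and strictly positive on a set of positive measure in every slab {x : x³ < c} and {x : x³ > c}. Define f(x³) = (2π/N) ∫_{-∞}^{x³} ∫∫ ρ(s,t,u) ds dt du, and for distinct integers (or half-integers) k ≠ l in the set K_N = {-(N-1)/2, ..., (N-1)/2}, define φ_k(x) = (ρ(x)/N)^{1/2} e^{i k f(x³)}. Then ∫_{ℝ³} φ_l(x)* φ_k(x) dx = δ_{kl}, i.e., the N functions {φ_k} form an orthonormal system in L²(ℝ³). -/

import Mathlib

open MeasureTheory Real Complex Set Filter Topology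
open scoped ENNReal NNReal

theorem stmt4 (N : ℕ) (hN : 0 < N) (ρ : ℝ × ℝ × ℝ → ℝ) (f : ℝ → ℝ)
    (φ : Fin N → ℝ × ℝ × ℝ → ℂ)
    (hρpos : ∀ x, 0 ≤ ρ x) (hρint : Integrable ρ) (hρN : ∫ x, ρ x = (N : ℝ))
    (hslab₁ : ∀ c : ℝ, 0 < volume {x : ℝ × ℝ × ℝ | x.2.2 < c ∧ 0 < ρ x})
    (hslab₂ : ∀ c : ℝ, 0 < volume {x : ℝ × ℝ × ℝ | c < x.2.2 ∧ 0 < ρ x})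
    (hf : ∀ c : ℝ, f c = (2 * π / N) * ∫ x in {x : ℝ × ℝ × ℝ | x.2.2 < c}, ρ x)
    (hφ : ∀ (j : Fin N) (x : ℝ × ℝ × ℝ),
      φ j x = (Real.sqrt (ρ x / N) : ℂ) *
        Complex.exp (Complex.I * (((j : ℝ) - ((N : ℝ) - 1) / 2) : ℝ) * (f x.2.2 : ℝ))) :
    ∀ j l : Fin N,
      (∫ x : ℝ × ℝ × ℝ, (starRingEnd ℂ) (φ l x) * φ j x) =
        if j = l then 1 else 0 := by
  have hNR : (0:ℝ) < N := Nat.cast_pos.mpr hN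
  have hNne : (N:ℝ) ≠ 0 := ne_of_gt hNR
  -- the weighted measure μ = ρ · volume on ℝ³ and its third marginal ν
  set μ : Measure (ℝ × ℝ × ℝ) :=
    volume.withDensity (fun x => ((ρ x).toNNReal : ℝ≥0∞)) with hμdef
  have hdnn : AEMeasurable (fun x => (ρ x).toNNReal) (volume : Measure (ℝ × ℝ × ℝ)) :=
    hρint.aemeasurable.real_toNNReal
  have hco : ∀ x : ℝ × ℝ × ℝ, (((ρ x).toNNReal : ℝ≥0∞)) = ENNReal.ofReal (ρ x) :=
    fun _ => rfl
  have hπm : Measurable (fun x : ℝ × ℝ × ℝ => x.2.2) := measurable_snd.comp measurable_snd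
  set ν : Measure ℝ := μ.map (fun x : ℝ × ℝ × ℝ => x.2.2) with hνdef
  have hμA : ∀ A : Set (ℝ × ℝ × ℝ), MeasurableSet A →
      μ A = ENNReal.ofReal (∫ x in A, ρ x) := by
    intro A hA
    rw [hμdef, withDensity_apply _ hA]
    rw [ofReal_integral_eq_lintegral_ofReal hρint.integrableOn
      (Filter.Eventually.of_forall fun x => hρpos x)]
    rfl
  have hνA : ∀ s : Set ℝ, MeasurableSet s →
      ν s = μ ((fun x : ℝ × ℝ × ℝ => x.2.2) ⁻¹' s) := by
    intro s hs
    rw [hνdef, Measure.map_apply hπm hs]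
  have hvolpre : ∀ s : Set ℝ, MeasurableSet s → volume s = 0 →
      (volume : Measure (ℝ × ℝ × ℝ)) ((fun x : ℝ × ℝ × ℝ => x.2.2) ⁻¹' s) = 0 := by
    intro s hs h0
    have h1 : ((fun x : ℝ × ℝ × ℝ => x.2.2) ⁻¹' s)
        = (univ : Set ℝ) ×ˢ ((univ : Set ℝ) ×ˢ s) := by
      ext x; simp [Set.mem_prod]
    rw [h1, Measure.volume_eq_prod, Measure.prod_prod, Measure.volume_eq_prod,
      Measure.prod_prod, h0, mul_zero, mul_zero]
  have hplane : ∀ c : ℝ, (volume : Measure (ℝ × ℝ × ℝ)) {x | x.2.2 = c} = 0 := by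
    intro c
    have := hvolpre {c} (measurableSet_singleton c) Real.volume_singleton
    exact this
  have hac : ν ≪ (volume : Measure ℝ) := by
    refine Measure.AbsolutelyContinuous.mk fun s hs h0 => ?_
    rw [hνA s hs, hμdef, withDensity_apply _ (hπm hs),
      Measure.restrict_eq_zero.mpr (hvolpre s hs h0)]
    exact lintegral_zero_measure _
  have hμuniv : μ univ = ENNReal.ofReal (N:ℝ) := by
    rw [hμA univ MeasurableSet.univ, Measure.restrict_univ, hρN]
  have hνuniv : ν univ = ENNReal.ofReal (N:ℝ) := by
    rw [hνA univ MeasurableSet.univ, Set.preimage_univ, hμuniv]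
  haveI hνfin : IsFiniteMeasure ν := ⟨by rw [hνuniv]; exact ENNReal.ofReal_lt_top⟩
  -- the cumulative function F
  set F : ℝ → ℝ := fun c => (ν (Iic c)).toReal with hFdef
  have hFc : ∀ c : ℝ, F c = (ν (Iic c)).toReal := fun c => by rw [hFdef]
  have hνIic : ∀ c : ℝ, ν (Iic c)
      = ENNReal.ofReal (∫ x in {x : ℝ × ℝ × ℝ | x.2.2 ≤ c}, ρ x) := by
    intro c
    rw [hνA _ measurableSet_Iic, hμA _ (hπm measurableSet_Iic)]
    rfl
  have hFval : ∀ c : ℝ, F c = ∫ x in {x : ℝ × ℝ × ℝ | x.2.2 ≤ c}, ρ x := by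
    intro c
    rw [hFc c, hνIic c, ENNReal.toReal_ofReal (integral_nonneg fun x => hρpos x)]
  have hlt_le : ∀ c : ℝ, (∫ x in {x : ℝ × ℝ × ℝ | x.2.2 < c}, ρ x)
      = ∫ x in {x : ℝ × ℝ × ℝ | x.2.2 ≤ c}, ρ x := by
    intro c
    apply setIntegral_congr_set
    rw [Filter.eventuallyEq_set]
    filter_upwards [measure_eq_zero_iff_ae_notMem.mp (hplane c)] with x hx
    have hx' : x.2.2 ≠ c := hx
    constructor
    · exact fun h => le_of_lt h
    · exact fun h => lt_of_le_of_ne h hx'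
  have hfF : ∀ c : ℝ, f c = (2 * π / N) * F c := by
    intro c
    rw [hf c, hlt_le c, ← hFval c]
  have hFmono : Monotone F := by
    intro a b hab
    exact ENNReal.toReal_mono (measure_ne_top ν _) (measure_mono (Iic_subset_Iic.mpr hab))
  have hF0 : ∀ c, 0 ≤ F c := fun c => ENNReal.toReal_nonneg
  have hFle : ∀ c, F c ≤ (N:ℝ) := by
    intro c
    have h1 : F c ≤ (ν univ).toReal :=
      ENNReal.toReal_mono (by rw [hνuniv]; exact ENNReal.ofReal_ne_top)
        (measure_mono (subset_univ _))
    rwa [hνuniv, ENNReal.toReal_ofReal hNR.le] at h1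
  -- continuity of F via the Radon–Nikodym density
  have hr : volume.withDensity (ν.rnDeriv volume) = ν :=
    Measure.withDensity_rnDeriv_eq ν volume hac
  have hrm : Measurable (ν.rnDeriv volume) := Measure.measurable_rnDeriv ν volume
  have hrfin : ∫⁻ u, ν.rnDeriv volume u ∂volume < ⊤ := Measure.lintegral_rnDeriv_lt_top ν volume
  have hrRint : Integrable (fun u => (ν.rnDeriv volume u).toReal) :=
    integrable_toReal_of_lintegral_ne_top hrm.aemeasurable hrfin.ne
  have hFI : ∀ c : ℝ, F c = ∫ u in Iic c, (ν.rnDeriv volume u).toReal := by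
    intro c
    have h6 : ν (Iic c) = ∫⁻ u in Iic c, ν.rnDeriv volume u ∂volume := by
      conv_lhs => rw [← hr]
      rw [withDensity_apply _ (measurableSet_Iic : MeasurableSet (Iic c))]
    rw [hFc c, h6]
    exact
      (integral_toReal hrm.aemeasurable.restrict
        (ae_restrict_of_ae (ae_lt_top hrm hrfin.ne))).symm
  have hFcont : Continuous F := by
    have h1 : F = fun b => F 0 + ∫ u in (0:ℝ)..b, (ν.rnDeriv volume u).toReal := by
      funext b
      have h2 := intervalIntegral.integral_Iic_sub_Iic (hrRint.integrableOn (s := Iic 0))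
        (hrRint.integrableOn (s := Iic b))
      rw [hFI b, hFI 0] at *
      linarith [h2]
    rw [h1]
    exact continuous_const.add (hrRint.continuous_primitive 0)
  have hFmeas : Measurable F := hFmono.measurable
  -- limits of F
  have hνtop : Tendsto (fun c : ℝ => ν (Iic c)) atTop (𝓝 (ENNReal.ofReal (N:ℝ))) := by
    rw [← hνuniv]; exact tendsto_measure_Iic_atTop ν
  have hFtop : Tendsto F atTop (𝓝 (N:ℝ)) := by
    have h1 := (ENNReal.tendsto_toReal (ENNReal.ofReal_ne_top)).comp hνtop
    simpa [hFdef, Function.comp_def, ENNReal.toReal_ofReal hNR.le] using h1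
  have hνbot : Tendsto (fun c : ℝ => ν (Iic c)) atBot (𝓝 0) := by
    have hinter : ⋂ c : ℝ, Iic c = (∅ : Set ℝ) := by
      ext u
      simp only [mem_iInter, mem_Iic, mem_empty_iff_false, iff_false, not_forall, not_le]
      exact ⟨u - 1, by linarith⟩
    have h1 := tendsto_measure_iInter_atBot (μ := ν)
      (fun c : ℝ => measurableSet_Iic.nullMeasurableSet)
      (fun a b hab => Iic_subset_Iic.mpr hab) ⟨0, measure_ne_top _ _⟩
    rw [hinter] at h1
    simpa [Function.comp_def] using h1
  have hFbot : Tendsto F atBot (𝓝 0) := by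
    have h1 := (ENNReal.tendsto_toReal (by simp : (0:ℝ≥0∞) ≠ ⊤)).comp hνbot
    simpa [hFdef, Function.comp_def] using h1
  -- the pushforward of ν under F is Lebesgue measure on (0, N)
  haveI : IsFiniteMeasure (ν.map F) :=
    ⟨by rw [Measure.map_apply hFmeas MeasurableSet.univ, preimage_univ]
        exact measure_lt_top ν _⟩
  have hmap : ν.map F = volume.restrict (Ioo 0 (N:ℝ)) := by
    refine Measure.ext_of_Iic _ _ (fun t => ?_)
    rw [Measure.map_apply hFmeas measurableSet_Iic, Measure.restrict_apply measurableSet_Iic]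
    by_cases htN : (N:ℝ) ≤ t
    · have hpre : F ⁻¹' (Iic t) = univ :=
        eq_univ_of_forall fun u => le_trans (hFle u) htN
      have hright : Iic t ∩ Ioo 0 (N:ℝ) = Ioo 0 (N:ℝ) :=
        inter_eq_right.mpr (fun u hu => le_of_lt (lt_of_lt_of_le hu.2 htN))
      rw [hpre, hright, hνuniv, Real.volume_Ioo, sub_zero]
    · push_neg at htN
      by_cases ht0 : t < 0
      · have hpre : F ⁻¹' (Iic t) = ∅ := by
          ext u
          simp only [mem_preimage, mem_Iic, mem_empty_iff_false, iff_false, not_le]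
          exact lt_of_lt_of_le ht0 (hF0 u)
        have hright : Iic t ∩ Ioo 0 (N:ℝ) = ∅ := by
          ext u
          simp only [mem_inter_iff, mem_Iic, mem_Ioo, mem_empty_iff_false, iff_false]
          rintro ⟨h1, h2, _⟩
          linarith
        simp [hpre, hright]
      · push_neg at ht0
        have hright : Iic t ∩ Ioo 0 (N:ℝ) = Ioc 0 t := by
          ext u
          simp only [mem_inter_iff, mem_Iic, mem_Ioo, mem_Ioc]
          constructor
          · rintro ⟨h1, h2, _⟩; exact ⟨h2, h1⟩
          · rintro ⟨h1, h2⟩; exact ⟨h2, h1, lt_of_le_of_lt h2 htN⟩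
        rcases eq_empty_or_nonempty (F ⁻¹' (Iic t)) with hS | hS
        · have ht0' : t ≤ 0 := by
            by_contra hcon
            push_neg at hcon
            obtain ⟨u, hu⟩ := (hFbot.eventually (eventually_lt_nhds hcon)).exists
            have : u ∈ F ⁻¹' (Iic t) := le_of_lt hu
            rw [hS] at this
            exact this
          have ht00 : t = 0 := le_antisymm ht0' ht0
          rw [hS, hright, ht00]
          simp
        · have hbdd : BddAbove (F ⁻¹' (Iic t)) := by
            obtain ⟨M, hM⟩ := Filter.eventually_atTop.mp
              (hFtop.eventually (eventually_gt_nhds htN))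
            exact ⟨M, fun u hu =>
              le_of_not_gt fun hMu => (not_le.mpr (hM u hMu.le)) hu⟩
          set c := sSup (F ⁻¹' (Iic t)) with hcdef
          have hSc : IsClosed (F ⁻¹' (Iic t)) := isClosed_Iic.preimage hFcont
          have hcmem : c ∈ F ⁻¹' (Iic t) := hSc.csSup_mem hS hbdd
          have hSeq : F ⁻¹' (Iic t) = Iic c := by
            ext u
            constructor
            · exact fun hu => le_csSup hbdd hu
            · intro hu
              exact le_trans (hFmono hu) hcmem
          have hFct : F c = t := by
            refine le_antisymm hcmem ?_
            have hseq : Tendsto (fun n : ℕ => F (c + 1/((n:ℝ)+1))) atTop (𝓝 (F c)) := by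
              have h1 : Tendsto (fun n : ℕ => c + 1/((n:ℝ)+1)) atTop (𝓝 c) := by
                have := tendsto_one_div_add_atTop_nhds_zero_nat (𝕜 := ℝ)
                have h2 := tendsto_const_nhds (x := c) (f := atTop (α := ℕ)) |>.add this
                simpa using h2
              exact (hFcont.tendsto c).comp h1
            refine ge_of_tendsto hseq (Filter.Eventually.of_forall fun n => ?_)
            by_contra hcon
            push_neg at hcon
            have hmem : c + 1/((n:ℝ)+1) ∈ F ⁻¹' (Iic t) := le_of_lt hcon
            have h3 := le_csSup hbdd hmem
            have h4 : (0:ℝ) < 1/((n:ℝ)+1) := by positivity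
            rw [← hcdef] at h3
            linarith
          rw [hSeq, hright, Real.volume_Ioc, sub_zero]
          have h5 : ν (Iic c) = ENNReal.ofReal (F c) := by
            rw [hFc c]
            exact (ENNReal.ofReal_toReal (measure_ne_top ν _)).symm
          rw [h5, hFct]
  -- now the main computation
  intro j l
  by_cases hjl : j = l
  · subst hjl
    rw [if_pos rfl]
    have key : ∀ x : ℝ × ℝ × ℝ, (starRingEnd ℂ) (φ j x) * φ j x = ((ρ x / N : ℝ) : ℂ) := by
      intro x
      rw [hφ]
      rw [map_mul, Complex.conj_ofReal, ← Complex.exp_conj]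
      have hc : (starRingEnd ℂ) (Complex.I * (((j : ℝ) - ((N : ℝ) - 1) / 2 : ℝ) : ℂ)
          * ((f x.2.2 : ℝ) : ℂ))
          = -(Complex.I * (((j : ℝ) - ((N : ℝ) - 1) / 2 : ℝ) : ℂ) * ((f x.2.2 : ℝ) : ℂ)) := by
        simp only [map_mul, Complex.conj_I, Complex.conj_ofReal]
        ring
      rw [hc]
      have : (Real.sqrt (ρ x / N) : ℂ) * Complex.exp (-(Complex.I
            * (((j : ℝ) - ((N : ℝ) - 1) / 2 : ℝ) : ℂ) * ((f x.2.2 : ℝ) : ℂ)))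
          * ((Real.sqrt (ρ x / N) : ℂ) * Complex.exp (Complex.I
            * (((j : ℝ) - ((N : ℝ) - 1) / 2 : ℝ) : ℂ) * ((f x.2.2 : ℝ) : ℂ)))
          = ((Real.sqrt (ρ x / N) : ℂ) * (Real.sqrt (ρ x / N) : ℂ))
            * (Complex.exp (-(Complex.I * (((j : ℝ) - ((N : ℝ) - 1) / 2 : ℝ) : ℂ)
              * ((f x.2.2 : ℝ) : ℂ)))
              * Complex.exp (Complex.I * (((j : ℝ) - ((N : ℝ) - 1) / 2 : ℝ) : ℂ)
              * ((f x.2.2 : ℝ) : ℂ))) := by ring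
      rw [this, ← Complex.exp_add, neg_add_cancel, Complex.exp_zero, mul_one,
        ← Complex.ofReal_mul, Real.mul_self_sqrt (div_nonneg (hρpos x) hNR.le)]
    simp only [key]
    have h1 : ∫ x : ℝ × ℝ × ℝ, ρ x / (N:ℝ) = 1 := by
      rw [integral_div, hρN, div_self hNne]
    calc ∫ x : ℝ × ℝ × ℝ, ((ρ x / (N:ℝ) : ℝ) : ℂ)
        = ((∫ x : ℝ × ℝ × ℝ, ρ x / (N:ℝ) : ℝ) : ℂ) := integral_ofReal
      _ = 1 := by rw [h1, Complex.ofReal_one]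
  · rw [if_neg hjl]
    set m : ℤ := (j : ℤ) - (l : ℤ) with hmdef
    have hm0 : m ≠ 0 := by
      rw [hmdef]
      intro h
      apply hjl
      have : (j : ℤ) = (l : ℤ) := by linarith [sub_eq_zero.mp h]
      exact Fin.ext (by exact_mod_cast this)
    set C : ℂ := Complex.I * (((m:ℝ)) : ℂ) * (((2 * π / (N:ℝ)) : ℝ) : ℂ) with hCdef
    have hC0 : C ≠ 0 := by
      rw [hCdef]
      apply mul_ne_zero
      · apply mul_ne_zero Complex.I_ne_zero
        exact Complex.ofReal_ne_zero.mpr (Int.cast_ne_zero.mpr hm0)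
      · refine Complex.ofReal_ne_zero.mpr (div_ne_zero ?_ hNne)
        positivity
    have hgcont : Continuous (fun θ : ℝ => Complex.exp (C * (θ : ℂ))) :=
      Complex.continuous_exp.comp (continuous_const.mul Complex.continuous_ofReal)
    have key : ∀ x : ℝ × ℝ × ℝ, (starRingEnd ℂ) (φ l x) * φ j x
        = ((ρ x / N : ℝ) : ℂ) * Complex.exp (C * ((F x.2.2 : ℝ) : ℂ)) := by
      intro x
      rw [hφ, hφ]
      rw [map_mul, Complex.conj_ofReal, ← Complex.exp_conj]
      have hc : (starRingEnd ℂ) (Complex.I * (((l : ℝ) - ((N : ℝ) - 1) / 2 : ℝ) : ℂ)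
          * ((f x.2.2 : ℝ) : ℂ))
          = -(Complex.I * (((l : ℝ) - ((N : ℝ) - 1) / 2 : ℝ) : ℂ) * ((f x.2.2 : ℝ) : ℂ)) := by
        simp only [map_mul, Complex.conj_I, Complex.conj_ofReal]
        ring
      rw [hc]
      have h1 : (Real.sqrt (ρ x / N) : ℂ) * Complex.exp (-(Complex.I
            * (((l : ℝ) - ((N : ℝ) - 1) / 2 : ℝ) : ℂ) * ((f x.2.2 : ℝ) : ℂ)))
          * ((Real.sqrt (ρ x / N) : ℂ) * Complex.exp (Complex.I
            * (((j : ℝ) - ((N : ℝ) - 1) / 2 : ℝ) : ℂ) * ((f x.2.2 : ℝ) : ℂ)))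
          = ((Real.sqrt (ρ x / N) : ℂ) * (Real.sqrt (ρ x / N) : ℂ))
            * (Complex.exp (-(Complex.I * (((l : ℝ) - ((N : ℝ) - 1) / 2 : ℝ) : ℂ)
              * ((f x.2.2 : ℝ) : ℂ)))
              * Complex.exp (Complex.I * (((j : ℝ) - ((N : ℝ) - 1) / 2 : ℝ) : ℂ)
              * ((f x.2.2 : ℝ) : ℂ))) := by ring
      rw [h1, ← Complex.exp_add, ← Complex.ofReal_mul,
        Real.mul_self_sqrt (div_nonneg (hρpos x) hNR.le)]
      congr 1
      rw [show -(Complex.I * (((l : ℝ) - ((N : ℝ) - 1) / 2 : ℝ) : ℂ) * ((f x.2.2 : ℝ) : ℂ))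
            + Complex.I * (((j : ℝ) - ((N : ℝ) - 1) / 2 : ℝ) : ℂ) * ((f x.2.2 : ℝ) : ℂ)
          = Complex.I * ((((j : ℝ) - ((N : ℝ) - 1) / 2 : ℝ) : ℂ)
            - (((l : ℝ) - ((N : ℝ) - 1) / 2 : ℝ) : ℂ)) * ((f x.2.2 : ℝ) : ℂ) from by ring]
      congr 1
      rw [hfF x.2.2, hCdef, hmdef]
      push_cast
      ring
    simp only [key]
    -- pull out the 1/N and pass to the measure μ, then ν, then the pushforward
    have step1 : (∫ x : ℝ × ℝ × ℝ, ((ρ x / N : ℝ) : ℂ) * Complex.exp (C * ((F x.2.2 : ℝ) : ℂ)))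
        = ((N:ℂ))⁻¹ * ∫ x : ℝ × ℝ × ℝ, ρ x • Complex.exp (C * ((F x.2.2 : ℝ) : ℂ)) := by
      rw [← integral_const_mul]
      apply integral_congr_ae
      apply Filter.Eventually.of_forall
      intro x
      simp only [Complex.real_smul]
      push_cast
      ring
    have step2 : (∫ x : ℝ × ℝ × ℝ, ρ x • Complex.exp (C * ((F x.2.2 : ℝ) : ℂ)))
        = ∫ x : ℝ × ℝ × ℝ, Complex.exp (C * ((F x.2.2 : ℝ) : ℂ)) ∂μ := by
      have h1 := integral_withDensity_eq_integral_smul₀ (μ := (volume : Measure (ℝ × ℝ × ℝ)))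
        hdnn (fun x : ℝ × ℝ × ℝ => Complex.exp (C * ((F x.2.2 : ℝ) : ℂ)))
      rw [hμdef]
      rw [h1]
      apply integral_congr_ae
      apply Filter.Eventually.of_forall
      intro x
      simp only [NNReal.smul_def]
      rw [Real.coe_toNNReal _ (hρpos x)]
    have step3 : (∫ x : ℝ × ℝ × ℝ, Complex.exp (C * ((F x.2.2 : ℝ) : ℂ)) ∂μ) = ∫ u, Complex.exp (C * ((F u : ℝ) : ℂ)) ∂ν := by
      rw [hνdef]
      exact (integral_map hπm.aemeasurable
        ((hgcont.comp hFcont).aestronglyMeasurable)).symm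
    have step4 : (∫ u, Complex.exp (C * ((F u : ℝ) : ℂ)) ∂ν) = ∫ θ, Complex.exp (C * ((θ : ℝ) : ℂ)) ∂(ν.map F) :=
      (integral_map hFmeas.aemeasurable hgcont.aestronglyMeasurable).symm
    have step5 : (∫ θ, Complex.exp (C * ((θ : ℝ) : ℂ)) ∂(ν.map F)) = 0 := by
      rw [hmap]
      have h1 : (∫ θ in Ioo (0:ℝ) (N:ℝ), Complex.exp (C * ((θ : ℝ) : ℂ))) = ∫ θ in (0:ℝ)..(N:ℝ), Complex.exp (C * θ) := by
        rw [intervalIntegral.integral_of_le hNR.le, integral_Ioc_eq_integral_Ioo]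
      rw [h1, integral_exp_mul_complex hC0]
      have hNC : ((N:ℝ) : ℂ) ≠ 0 := Complex.ofReal_ne_zero.mpr hNne
      have h2 : C * ((N:ℝ) : ℂ) = (m:ℂ) * (2 * (π:ℂ) * Complex.I) := by
        rw [hCdef]
        push_cast
        field_simp
        rw [div_eq_iff (show ((N:ℕ):ℂ) ≠ 0 by exact_mod_cast hNne)]
        ring
      rw [h2, Complex.exp_int_mul_two_pi_mul_I]
      norm_num
    rw [step1, step2, step3, step4, step5, mul_zero]
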